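/- arXiv:2007.14156 — 6 statements merged into one kernel-verified Lean document; each statement's English description precedes it below -/
import Mathlib

section
/- Every proper function is weakly supermodular: if f: 2^V → {0,1} satisfies f(V)=0, f(S)=f(V∖S) for all S, and f(A∪B) ≤ max{f(A), f(B)} for all disjoint A,B ⊆ V, then f(∅)=f(V)=0 and for all A,B ⊆ V, f(A)+f(B) ≤ max{f(A∩B)+f(A∪B), f(A∖B)+f(B∖A)}. -/
/-- Every proper function is weakly supermodular. -/
theorem proper_implies_weakly_supermodular
    {V : Type*} [Fintype V] [DecidableEq V]
    (f : Finset V → ℕ) (h01 : ∀ S, f S ≤ 1)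
    (hV : f (Finset.univ : Finset V) = 0)
    (hsym : ∀ S : Finset V, f S = f (Finset.univ \ S))
    (hprop : ∀ A B : Finset V, Disjoint A B → f (A ∪ B) ≤ max (f A) (f B)) :
    f (∅ : Finset V) = 0 ∧ f (Finset.univ : Finset V) = 0 ∧
      ∀ A B : Finset V,
        f A + f B ≤ max (f (A ∩ B) + f (A ∪ B)) (f (A \ B) + f (B \ A)) := by
  have hempty : f (∅ : Finset V) = 0 := by
    have := hsym (∅ : Finset V)
    simpa [hV] using this
  refine ⟨hempty, hV, ?_⟩
  intro A B
  -- h1 : f A ≤ max (f (A∩B)) (f (A\B))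
  have e1 : (A ∩ B) ∪ (A \ B) = A := by ext x; simp; tauto
  have h1 : f A ≤ max (f (A ∩ B)) (f (A \ B)) := by
    have := hprop (A ∩ B) (A \ B) (Finset.disjoint_sdiff.mono_left Finset.inter_subset_right)
    rwa [e1] at this
  have e2 : (A ∩ B) ∪ (B \ A) = B := by
    ext x; simp; tauto
  have h2 : f B ≤ max (f (A ∩ B)) (f (B \ A)) := by
    have := hprop (A ∩ B) (B \ A) (Finset.disjoint_sdiff.mono_left Finset.inter_subset_left)
    rwa [e2] at this
  -- complements
  have e3 : (Finset.univ \ (A ∪ B)) ∪ (B \ A) = Finset.univ \ A := by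
    ext x; simp; tauto
  have h3 : f A ≤ max (f (A ∪ B)) (f (B \ A)) := by
    have hd : Disjoint (Finset.univ \ (A ∪ B)) (B \ A) := by
      rw [Finset.disjoint_left]; intro x hx hx2; simp at hx hx2; tauto
    have := hprop _ _ hd
    rw [e3, ← hsym, ← hsym] at this
    exact this
  have e4 : (Finset.univ \ (A ∪ B)) ∪ (A \ B) = Finset.univ \ B := by
    ext x; simp; tauto
  have h4 : f B ≤ max (f (A ∪ B)) (f (A \ B)) := by
    have hd : Disjoint (Finset.univ \ (A ∪ B)) (A \ B) := by
      rw [Finset.disjoint_left]; intro x hx hx2; simp at hx hx2; tauto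
    have := hprop _ _ hd
    rw [e4, ← hsym, ← hsym] at this
    exact this
  have b1 := h01 A; have b2 := h01 B; have b3 := h01 (A ∩ B)
  have b4 := h01 (A ∪ B); have b5 := h01 (A \ B); have b6 := h01 (B \ A)
  omega
end

section
/- If f: 2^V → {0,1} is uncrossable, then any two distinct minimal sets S with f(S)=1 that are not crossed by a given edge set F are disjoint. That is, if A and B are both inclusion-minimal among sets S with f(S)=1 and δ_F(S)=∅, and A ≠ B, then A ∩ B = ∅. -/
/-- An edge (unordered, represented as a pair) crosses a set `S` if it has
exactly one endpoint in `S`. -/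
abbrev crossesEdge {V : Type*} [DecidableEq V] (e : V × V) (S : Finset V) : Prop :=
  ¬(e.1 ∈ S ↔ e.2 ∈ S)

/-- For an uncrossable function `f`, two distinct minimally unsatisfied sets
(with respect to an edge set `F`) are disjoint. -/
theorem minimal_unsatisfied_disjoint
    {V : Type*} [Fintype V] [DecidableEq V]
    (f : Finset V → ℕ) (h01 : ∀ S, f S ≤ 1)
    (hempty : f (∅ : Finset V) = 0) (hV : f (Finset.univ : Finset V) = 0)
    (huncross : ∀ A B : Finset V, f A = 1 → f B = 1 →
      (f (A ∩ B) = 1 ∧ f (A ∪ B) = 1) ∨ (f (A \ B) = 1 ∧ f (B \ A) = 1))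
    (F : Finset (V × V)) (A B : Finset V)
    (hAuns : f A = 1 ∧ ∀ e ∈ F, ¬ crossesEdge e A)
    (hAmin : ∀ T : Finset V, T ⊂ A → T.Nonempty →
      ¬(f T = 1 ∧ ∀ e ∈ F, ¬ crossesEdge e T))
    (hBuns : f B = 1 ∧ ∀ e ∈ F, ¬ crossesEdge e B)
    (hBmin : ∀ T : Finset V, T ⊂ B → T.Nonempty →
      ¬(f T = 1 ∧ ∀ e ∈ F, ¬ crossesEdge e T))
    (hne : A ≠ B) :
    A ∩ B = ∅ := by
  by_contra hAB
  obtain ⟨hfA, hFA⟩ := hAuns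
  obtain ⟨hfB, hFB⟩ := hBuns
  have hABne : (A ∩ B).Nonempty := Finset.nonempty_iff_ne_empty.mpr hAB
  have hnocross : ∀ S : Finset V, (∀ x, x ∈ S ↔ x ∈ A ∧ x ∈ B) →
      ∀ e ∈ F, ¬ crossesEdge e S := by
    intro S hS e he hc
    apply hc
    have h1 := hFA e he
    have h2 := hFB e he
    simp only [crossesEdge, not_not] at h1 h2
    rw [hS, hS, h1, h2]
  have hnocrossd : ∀ S : Finset V, (∀ x, x ∈ S ↔ x ∈ A ∧ x ∉ B) →
      ∀ e ∈ F, ¬ crossesEdge e S := by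
    intro S hS e he hc
    apply hc
    have h1 := hFA e he
    have h2 := hFB e he
    simp only [crossesEdge, not_not] at h1 h2
    rw [hS, hS, h1, h2]
  rcases huncross A B hfA hfB with ⟨h1, _⟩ | ⟨h1, h2⟩
  · -- f(A ∩ B) = 1
    have hcr : ∀ e ∈ F, ¬ crossesEdge e (A ∩ B) :=
      hnocross _ (fun x => Finset.mem_inter)
    by_cases hsub : A ⊆ B
    · have hAssB : A ⊂ B := hsub.ssubset_of_ne hne
      have hAnon : A.Nonempty := by
        rw [Finset.nonempty_iff_ne_empty]; rintro rfl; rw [hempty] at hfA; omega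
      exact hBmin A hAssB hAnon ⟨hfA, hFA⟩
    · have hss : A ∩ B ⊂ A := by
        constructor
        · exact Finset.inter_subset_left
        · intro h
          exact hsub fun x hx => (Finset.mem_inter.mp (h hx)).2
      exact hAmin _ hss hABne ⟨h1, hcr⟩
  · -- f(A \ B) = 1
    have hcr : ∀ e ∈ F, ¬ crossesEdge e (A \ B) :=
      hnocrossd _ (fun x => Finset.mem_sdiff)
    have hss : A \ B ⊂ A := by
      obtain ⟨x, hx⟩ := hABne
      rw [Finset.mem_inter] at hx
      constructor
      · exact Finset.sdiff_subset
      · intro h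
        have := h hx.1
        rw [Finset.mem_sdiff] at this
        exact this.2 hx.2
    by_cases hnon : (A \ B).Nonempty
    · exact hAmin _ hss hnon ⟨h1, hcr⟩
    · rw [Finset.not_nonempty_iff_eq_empty] at hnon
      rw [hnon, hempty] at h1; omega
end

section
/- For the 2-edge-connectivity augmentation requirement function, f is uncrossable: given a graph (V, Y), define f(S)=1 if exactly one edge of Y crosses the cut (S, V∖S) and f(S)=0 otherwise; then f(∅)=f(V)=0 and for all A,B with f(A)=f(B)=1, either f(A∩B)=f(A∪B)=1 or f(A∖B)=f(B∖A)=1. -/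
private lemma filt_singleton {α : Type*} [DecidableEq α] (Y : Finset α) (p : α → Prop)
    [DecidablePred p] (e e' : α)
    (hsub : ∀ g ∈ Y, p g → g = e ∨ g = e')
    (heY : e ∈ Y) (hpe : p e) (hpe' : p e' → e' = e) :
    Y.filter p = {e} := by
  ext g
  simp only [Finset.mem_filter, Finset.mem_singleton]
  constructor
  · rintro ⟨hgY, hpg⟩
    rcases hsub g hgY hpg with h | h
    · exact h
    · subst h; exact hpe' hpg
  · rintro rfl; exact ⟨heY, hpe⟩

set_option maxHeartbeats 1000000 in
/-- The 2-edge-connectivity augmentation requirement function — `f S = 1` iff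
exactly one edge of `Y` crosses the cut `(S, V \ S)` — is uncrossable. -/
theorem augmentation_requirement_uncrossable
    {V : Type*} [Fintype V] [DecidableEq V]
    (Y : Finset (V × V)) (f : Finset V → ℕ)
    (hf : ∀ S : Finset V,
      f S = if (Y.filter (fun e => ¬(e.1 ∈ S ↔ e.2 ∈ S))).card = 1 then 1 else 0) :
    f (∅ : Finset V) = 0 ∧ f (Finset.univ : Finset V) = 0 ∧
      ∀ A B : Finset V, f A = 1 → f B = 1 →
        (f (A ∩ B) = 1 ∧ f (A ∪ B) = 1) ∨ (f (A \ B) = 1 ∧ f (B \ A) = 1) := by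
  refine ⟨by rw [hf]; simp, by rw [hf]; simp, ?_⟩
  intro A B hA hB
  rw [hf] at hA hB
  have hA1 : (Y.filter (fun e => ¬(e.1 ∈ A ↔ e.2 ∈ A))).card = 1 := by
    by_contra h; rw [if_neg h] at hA; simp at hA
  have hB1 : (Y.filter (fun e => ¬(e.1 ∈ B ↔ e.2 ∈ B))).card = 1 := by
    by_contra h; rw [if_neg h] at hB; simp at hB
  obtain ⟨e, he⟩ := Finset.card_eq_one.mp hA1
  obtain ⟨e', he'⟩ := Finset.card_eq_one.mp hB1
  have heY : e ∈ Y ∧ ¬(e.1 ∈ A ↔ e.2 ∈ A) := by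
    have : e ∈ Y.filter (fun g => ¬(g.1 ∈ A ↔ g.2 ∈ A)) := he ▸ Finset.mem_singleton_self e
    simpa using this
  have he'Y : e' ∈ Y ∧ ¬(e'.1 ∈ B ↔ e'.2 ∈ B) := by
    have : e' ∈ Y.filter (fun g => ¬(g.1 ∈ B ↔ g.2 ∈ B)) := he' ▸ Finset.mem_singleton_self e'
    simpa using this
  have huA : ∀ g ∈ Y, ¬(g.1 ∈ A ↔ g.2 ∈ A) → g = e := by
    intro g hg hc
    have : g ∈ Y.filter (fun g => ¬(g.1 ∈ A ↔ g.2 ∈ A)) := Finset.mem_filter.mpr ⟨hg, hc⟩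
    rw [he] at this; simpa using this
  have huB : ∀ g ∈ Y, ¬(g.1 ∈ B ↔ g.2 ∈ B) → g = e' := by
    intro g hg hc
    have : g ∈ Y.filter (fun g => ¬(g.1 ∈ B ↔ g.2 ∈ B)) := Finset.mem_filter.mpr ⟨hg, hc⟩
    rw [he'] at this; simpa using this
  -- every edge crossing a derived set equals e or e'
  have hsubI : ∀ g ∈ Y, ¬(g.1 ∈ A ∩ B ↔ g.2 ∈ A ∩ B) → g = e ∨ g = e' := by
    intro g hg hc
    simp only [Finset.mem_inter] at hc
    have : ¬(g.1 ∈ A ↔ g.2 ∈ A) ∨ ¬(g.1 ∈ B ↔ g.2 ∈ B) := by tauto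
    rcases this with h | h
    · exact Or.inl (huA g hg h)
    · exact Or.inr (huB g hg h)
  have hsubU : ∀ g ∈ Y, ¬(g.1 ∈ A ∪ B ↔ g.2 ∈ A ∪ B) → g = e ∨ g = e' := by
    intro g hg hc
    simp only [Finset.mem_union] at hc
    have : ¬(g.1 ∈ A ↔ g.2 ∈ A) ∨ ¬(g.1 ∈ B ↔ g.2 ∈ B) := by tauto
    rcases this with h | h
    · exact Or.inl (huA g hg h)
    · exact Or.inr (huB g hg h)
  have hsubD : ∀ g ∈ Y, ¬(g.1 ∈ A \ B ↔ g.2 ∈ A \ B) → g = e ∨ g = e' := by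
    intro g hg hc
    simp only [Finset.mem_sdiff] at hc
    have : ¬(g.1 ∈ A ↔ g.2 ∈ A) ∨ ¬(g.1 ∈ B ↔ g.2 ∈ B) := by tauto
    rcases this with h | h
    · exact Or.inl (huA g hg h)
    · exact Or.inr (huB g hg h)
  have hsubD' : ∀ g ∈ Y, ¬(g.1 ∈ B \ A ↔ g.2 ∈ B \ A) → g = e ∨ g = e' := by
    intro g hg hc
    simp only [Finset.mem_sdiff] at hc
    have : ¬(g.1 ∈ A ↔ g.2 ∈ A) ∨ ¬(g.1 ∈ B ↔ g.2 ∈ B) := by tauto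
    rcases this with h | h
    · exact Or.inl (huA g hg h)
    · exact Or.inr (huB g hg h)
  have hce := heY.2
  have hce' := he'Y.2
  by_cases hee : e = e'
  · subst hee
    by_cases hal : (e.1 ∈ A ↔ e.1 ∈ B)
    · -- aligned: e crosses A ∩ B and A ∪ B
      have hI : Y.filter (fun g => ¬(g.1 ∈ A ∩ B ↔ g.2 ∈ A ∩ B)) = {e} :=
        filt_singleton Y _ e e hsubI heY.1
          (by simp only [Finset.mem_inter]; clear hf huA huB hsubI hsubU hsubD hsubD' he he' hA hB hA1 hB1 heY he'Y; tauto) (fun _ => rfl)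
      have hU : Y.filter (fun g => ¬(g.1 ∈ A ∪ B ↔ g.2 ∈ A ∪ B)) = {e} :=
        filt_singleton Y _ e e hsubU heY.1
          (by simp only [Finset.mem_union]; clear hf huA huB hsubI hsubU hsubD hsubD' he he' hA hB hA1 hB1 heY he'Y; tauto) (fun _ => rfl)
      refine Or.inl ⟨?_, ?_⟩
      · rw [hf, hI]; simp
      · rw [hf, hU]; simp
    · -- anti-aligned: e crosses A \ B and B \ A
      have hD : Y.filter (fun g => ¬(g.1 ∈ A \ B ↔ g.2 ∈ A \ B)) = {e} :=
        filt_singleton Y _ e e hsubD heY.1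
          (by simp only [Finset.mem_sdiff]; clear hf huA huB hsubI hsubU hsubD hsubD' he he' hA hB hA1 hB1 heY he'Y; tauto) (fun _ => rfl)
      have hD' : Y.filter (fun g => ¬(g.1 ∈ B \ A ↔ g.2 ∈ B \ A)) = {e} :=
        filt_singleton Y _ e e hsubD' heY.1
          (by simp only [Finset.mem_sdiff]; clear hf huA huB hsubI hsubU hsubD hsubD' he he' hA hB hA1 hB1 heY he'Y; tauto) (fun _ => rfl)
      refine Or.inr ⟨?_, ?_⟩
      · rw [hf, hD]; simp
      · rw [hf, hD']; simp
  · have hnB : (e.1 ∈ B ↔ e.2 ∈ B) := by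
      by_contra h; exact hee (huB e heY.1 h)
    have hnA : (e'.1 ∈ A ↔ e'.2 ∈ A) := by
      by_contra h; exact hee (huA e' he'Y.1 h).symm
    by_cases hb : e.1 ∈ B <;> by_cases ha : e'.1 ∈ A
    · -- e inside B, e' inside A : right branch
      have hD : Y.filter (fun g => ¬(g.1 ∈ A \ B ↔ g.2 ∈ A \ B)) = {e'} :=
        filt_singleton Y _ e' e (fun g hg hc => (hsubD g hg hc).symm) he'Y.1
          (by simp only [Finset.mem_sdiff]; clear hf huA huB hsubI hsubU hsubD hsubD' he he' hA hB hA1 hB1 heY he'Y; tauto)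
          (fun h => absurd h (by simp only [Finset.mem_sdiff]; clear hf huA huB hsubI hsubU hsubD hsubD' he he' hA hB hA1 hB1 heY he'Y; tauto))
      have hD' : Y.filter (fun g => ¬(g.1 ∈ B \ A ↔ g.2 ∈ B \ A)) = {e} :=
        filt_singleton Y _ e e' hsubD' heY.1
          (by simp only [Finset.mem_sdiff]; clear hf huA huB hsubI hsubU hsubD hsubD' he he' hA hB hA1 hB1 heY he'Y; tauto)
          (fun h => absurd h (by simp only [Finset.mem_sdiff]; clear hf huA huB hsubI hsubU hsubD hsubD' he he' hA hB hA1 hB1 heY he'Y; tauto))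
      refine Or.inr ⟨?_, ?_⟩
      · rw [hf, hD]; simp
      · rw [hf, hD']; simp
    · -- e inside B, e' outside A : left branch
      have hI : Y.filter (fun g => ¬(g.1 ∈ A ∩ B ↔ g.2 ∈ A ∩ B)) = {e} :=
        filt_singleton Y _ e e' hsubI heY.1
          (by simp only [Finset.mem_inter]; clear hf huA huB hsubI hsubU hsubD hsubD' he he' hA hB hA1 hB1 heY he'Y; tauto)
          (fun h => absurd h (by simp only [Finset.mem_inter]; clear hf huA huB hsubI hsubU hsubD hsubD' he he' hA hB hA1 hB1 heY he'Y; tauto))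
      have hU : Y.filter (fun g => ¬(g.1 ∈ A ∪ B ↔ g.2 ∈ A ∪ B)) = {e'} :=
        filt_singleton Y _ e' e (fun g hg hc => (hsubU g hg hc).symm) he'Y.1
          (by simp only [Finset.mem_union]; clear hf huA huB hsubI hsubU hsubD hsubD' he he' hA hB hA1 hB1 heY he'Y; tauto)
          (fun h => absurd h (by simp only [Finset.mem_union]; clear hf huA huB hsubI hsubU hsubD hsubD' he he' hA hB hA1 hB1 heY he'Y; tauto))
      refine Or.inl ⟨?_, ?_⟩
      · rw [hf, hI]; simp
      · rw [hf, hU]; simp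
    · -- e outside B, e' inside A : left branch
      have hI : Y.filter (fun g => ¬(g.1 ∈ A ∩ B ↔ g.2 ∈ A ∩ B)) = {e'} :=
        filt_singleton Y _ e' e (fun g hg hc => (hsubI g hg hc).symm) he'Y.1
          (by simp only [Finset.mem_inter]; clear hf huA huB hsubI hsubU hsubD hsubD' he he' hA hB hA1 hB1 heY he'Y; tauto)
          (fun h => absurd h (by simp only [Finset.mem_inter]; clear hf huA huB hsubI hsubU hsubD hsubD' he he' hA hB hA1 hB1 heY he'Y; tauto))
      have hU : Y.filter (fun g => ¬(g.1 ∈ A ∪ B ↔ g.2 ∈ A ∪ B)) = {e} :=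
        filt_singleton Y _ e e' hsubU heY.1
          (by simp only [Finset.mem_union]; clear hf huA huB hsubI hsubU hsubD hsubD' he he' hA hB hA1 hB1 heY he'Y; tauto)
          (fun h => absurd h (by simp only [Finset.mem_union]; clear hf huA huB hsubI hsubU hsubD hsubD' he he' hA hB hA1 hB1 heY he'Y; tauto))
      refine Or.inl ⟨?_, ?_⟩
      · rw [hf, hI]; simp
      · rw [hf, hU]; simp
    · -- e outside B, e' outside A : right branch
      have hD : Y.filter (fun g => ¬(g.1 ∈ A \ B ↔ g.2 ∈ A \ B)) = {e} :=
        filt_singleton Y _ e e' hsubD heY.1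
          (by simp only [Finset.mem_sdiff]; clear hf huA huB hsubI hsubU hsubD hsubD' he he' hA hB hA1 hB1 heY he'Y; tauto)
          (fun h => absurd h (by simp only [Finset.mem_sdiff]; clear hf huA huB hsubI hsubU hsubD hsubD' he he' hA hB hA1 hB1 heY he'Y; tauto))
      have hD' : Y.filter (fun g => ¬(g.1 ∈ B \ A ↔ g.2 ∈ B \ A)) = {e'} :=
        filt_singleton Y _ e' e (fun g hg hc => (hsubD' g hg hc).symm) he'Y.1
          (by simp only [Finset.mem_sdiff]; clear hf huA huB hsubI hsubU hsubD hsubD' he he' hA hB hA1 hB1 heY he'Y; tauto)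
          (fun h => absurd h (by simp only [Finset.mem_sdiff]; clear hf huA huB hsubI hsubU hsubD hsubD' he he' hA hB hA1 hB1 heY he'Y; tauto))
      refine Or.inr ⟨?_, ?_⟩
      · rw [hf, hD]; simp
      · rw [hf, hD']; simp
end

section
/- Crossing-family partition property: Let 𝒮 be a laminar family of subsets of V containing a set A, and for each S ∈ 𝒮 with S ⊆ A define α(S) = δ_F(S) ∖ ∪{δ_F(T) : T ∈ 𝒮, T ⊊ S}. Then the sets {α(S) : S ∈ 𝒮, S ⊆ A} are pairwise disjoint and their union contains δ_F(A); in particular they partition δ_F(A) when every edge of δ_F(A) lies in some δ_F(S) with S ⊆ A minimal. -/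
/-- The edges of `F` with exactly one endpoint in `S`. -/
def cutE {V : Type*} [DecidableEq V] (F : Finset (V × V)) (S : Finset V) :
    Finset (V × V) :=
  F.filter fun e => ¬(e.1 ∈ S ↔ e.2 ∈ S)

/-- `α(S) = δ_F(S) \ ⋃ {δ_F(T) : T ∈ 𝒮, T ⊊ S}`. -/
def alphaE {V : Type*} [DecidableEq V] (F : Finset (V × V))
    (𝒮 : Finset (Finset V)) (S : Finset V) : Finset (V × V) :=
  cutE F S \ (𝒮.filter fun T => T ⊂ S).biUnion (cutE F)

/-- Partition property: for a laminar family `𝒮` containing `A`, every edge of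
`δ_F(A)` lies in exactly one of the sets `α(S)` for `S ∈ 𝒮`, `S ⊆ A`; i.e. the
collection `{α(S) : S ∈ 𝒮, S ⊆ A}` partitions `δ_F(A)`. -/
theorem alpha_partitions_cut
    {V : Type*} [Fintype V] [DecidableEq V]
    (F : Finset (V × V)) (𝒮 : Finset (Finset V))
    (hlam : ∀ S ∈ 𝒮, ∀ T ∈ 𝒮, S ⊆ T ∨ T ⊆ S ∨ Disjoint S T)
    (A : Finset V) (hA : A ∈ 𝒮) :
    ∀ e ∈ cutE F A, ∃! S : Finset V, S ∈ 𝒮 ∧ S ⊆ A ∧ e ∈ alphaE F 𝒮 S := by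
  intro e he
  have heA : ¬ (e.1 ∈ A ↔ e.2 ∈ A) := (Finset.mem_filter.mp he).2
  set 𝒯 := 𝒮.filter (fun S => S ⊆ A ∧ e ∈ cutE F S) with h𝒯
  have hne : 𝒯.Nonempty := ⟨A, by simp [h𝒯, hA, he]⟩
  obtain ⟨S, hS𝒯, hmin⟩ := 𝒯.exists_minimal hne
  simp only [h𝒯, Finset.mem_filter] at hS𝒯
  obtain ⟨hS𝒮, hSA, heS⟩ := hS𝒯
  have halpha : e ∈ alphaE F 𝒮 S := by
    simp only [alphaE, Finset.mem_sdiff, Finset.mem_biUnion, Finset.mem_filter]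
    refine ⟨heS, ?_⟩
    rintro ⟨T, ⟨hT𝒮, hTS⟩, heT⟩
    exact hTS.2 (hmin (by simp [h𝒯, hT𝒮, hTS.subset.trans hSA, heT]) hTS.subset)
  refine ⟨S, ⟨hS𝒮, hSA, halpha⟩, ?_⟩
  rintro S' ⟨hS'𝒮, hS'A, heS'⟩
  simp only [alphaE, Finset.mem_sdiff, Finset.mem_biUnion, Finset.mem_filter,
    not_exists] at heS' halpha
  obtain ⟨hcutS', hnoS'⟩ := heS'
  obtain ⟨hcutS, hnoS⟩ := halpha
  rcases hlam S' hS'𝒮 S hS𝒮 with h | h | h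
  · rcases h.eq_or_ssubset with h | h
    · exact h
    · exact (hnoS S' ⟨⟨hS'𝒮, h⟩, hcutS'⟩).elim
  · rcases h.eq_or_ssubset with h | h
    · exact h.symm
    · exact (hnoS' S ⟨⟨hS𝒮, h⟩, hcutS⟩).elim
  · exfalso
    have hd := Finset.disjoint_left.mp h
    have h1 := (Finset.mem_filter.mp hcutS).2
    have h2 := (Finset.mem_filter.mp hcutS').2
    by_cases h1' : e.1 ∈ S' <;> by_cases h2' : e.2 ∈ S' <;>
      by_cases h1s : e.1 ∈ S <;> by_cases h2s : e.2 ∈ S <;>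
      exact h1 (by tauto)
end

section
/- Degree bound from criticality (Lemma 'twice'): if additionally every critical set A in iteration i satisfies αⁱ(A) ≠ ∅, and no active set is critical, then Σ_{A ∈ 𝒜ⁱ} |δ_F(A)| ≤ 2|𝒜ⁱ| − 2. -/
/-- Degree bound from criticality: if `∑_{S ∈ 𝒮} |α(S)| ≤ 2|𝒜| − 2 + |ℛ|`,
no active set is critical, `α(A) = δ_F(A)` for active `A`, and `α(A) ≠ ∅` for
every critical `A`, then `∑_{A ∈ 𝒜} |δ_F(A)| ≤ 2|𝒜| − 2`. -/
theorem active_degree_bound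
    {V : Type*} [Fintype V] [DecidableEq V]
    (F : Finset (V × V)) (𝒮 𝒜 ℛ : Finset (Finset V))
    (α : Finset V → Finset (V × V))
    (h𝒜 : 𝒜 ⊆ 𝒮) (hℛ : ℛ ⊆ 𝒮) (hdisj : Disjoint 𝒜 ℛ)
    (hsum : (∑ S ∈ 𝒮, ((α S).card : ℤ))
      ≤ 2 * (𝒜.card : ℤ) - 2 + (ℛ.card : ℤ))
    (hact : ∀ A ∈ 𝒜, α A = cutE F A)
    (hcrit : ∀ A ∈ ℛ, (α A).Nonempty) :
    (∑ A ∈ 𝒜, ((cutE F A).card : ℤ)) ≤ 2 * (𝒜.card : ℤ) - 2 := by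
  have h1 : (∑ A ∈ 𝒜, ((cutE F A).card : ℤ)) = ∑ A ∈ 𝒜, ((α A).card : ℤ) :=
    Finset.sum_congr rfl fun A hA => by rw [hact A hA]
  have hsub : 𝒜 ∪ ℛ ⊆ 𝒮 := Finset.union_subset h𝒜 hℛ
  have h2 : (∑ S ∈ 𝒜 ∪ ℛ, ((α S).card : ℤ)) ≤ ∑ S ∈ 𝒮, ((α S).card : ℤ) :=
    Finset.sum_le_sum_of_subset_of_nonneg hsub (fun _ _ _ => Int.ofNat_nonneg _)
  rw [Finset.sum_union hdisj] at h2
  have h3 : (ℛ.card : ℤ) ≤ ∑ A ∈ ℛ, ((α A).card : ℤ) := by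
    calc (ℛ.card : ℤ) = ∑ _A ∈ ℛ, (1 : ℤ) := by simp
      _ ≤ _ := Finset.sum_le_sum fun A hA => by
        exact_mod_cast Finset.card_pos.mpr (hcrit A hA)
  rw [h1]; linarith
end

section
/- For proper requirement functions, the minimally unsatisfied sets with respect to a forest F of tight edges are exactly the connected components C of F with f(C)=1. -/
private lemma closed_mem' {V : Type*} {F : Finset (V × V)} {S : Finset V}
    (hS : ∀ e ∈ F, (e.1 ∈ S ↔ e.2 ∈ S)) {u w : V} (hu : u ∈ S)
    (h : Relation.ReflTransGen (fun a b => (a, b) ∈ F ∨ (b, a) ∈ F) u w) : w ∈ S := by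
  induction h with
  | refl => exact hu
  | tail _ step ih =>
    rcases step with h | h
    · exact (hS _ h).mp ih
    · exact (hS _ h).mpr ih

private lemma exists_comp' {V : Type*} [Fintype V] [DecidableEq V]
    {F : Finset (V × V)}
    (f : Finset V → ℕ) (h01 : ∀ S, f S ≤ 1)
    (hV : f (Finset.univ : Finset V) = 0)
    (hsym : ∀ S : Finset V, f S = f (Finset.univ \ S))
    (hprop : ∀ A B : Finset V, Disjoint A B → f (A ∪ B) ≤ max (f A) (f B)) :
    ∀ S : Finset V, (∀ e ∈ F, (e.1 ∈ S ↔ e.2 ∈ S)) → f S = 1 →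
      ∃ C : Finset V, C ⊆ S ∧ C.Nonempty ∧ f C = 1 ∧
        ∃ v : V, ∀ u : V, u ∈ C ↔
          Relation.ReflTransGen (fun a b => (a, b) ∈ F ∨ (b, a) ∈ F) v u := by
  classical
  intro S
  induction S using Finset.strongInduction with
  | _ S ih =>
    intro hclosed hfS
    -- S is nonempty
    have hSne : S.Nonempty := by
      rcases S.eq_empty_or_nonempty with rfl | h
      · have : f (∅ : Finset V) = 0 := by
          have := hsym (∅ : Finset V)
          simpa [hV] using this
        omega
      · exact h
    obtain ⟨v, hv⟩ := hSne
    set C : Finset V := Finset.univ.filter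
      (fun u => Relation.ReflTransGen (fun a b => (a, b) ∈ F ∨ (b, a) ∈ F) v u) with hC
    have hmemC : ∀ u, u ∈ C ↔
        Relation.ReflTransGen (fun a b => (a, b) ∈ F ∨ (b, a) ∈ F) v u := by
      intro u; simp [hC]
    have hCsub : C ⊆ S := by
      intro u hu
      exact closed_mem' hclosed hv ((hmemC u).mp hu)
    have hvC : v ∈ C := (hmemC v).mpr Relation.ReflTransGen.refl
    by_cases hfC : f C = 1
    · exact ⟨C, hCsub, ⟨v, hvC⟩, hfC, v, hmemC⟩
    · have hfC0 : f C = 0 := by have := h01 C; omega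
      set T : Finset V := S \ C with hT
      have hTclosed : ∀ e ∈ F, (e.1 ∈ T ↔ e.2 ∈ T) := by
        intro e he
        have h1 : e.1 ∈ C ↔ e.2 ∈ C := by
          constructor
          · intro h; exact (hmemC _).mpr (((hmemC _).mp h).tail (Or.inl he))
          · intro h; exact (hmemC _).mpr (((hmemC _).mp h).tail (Or.inr he))
        have h2 := hclosed e he
        simp only [hT, Finset.mem_sdiff]
        tauto
      have hdisj : Disjoint C T := Finset.disjoint_sdiff
      have hunion : C ∪ T = S := by
        simp [hT, Finset.union_sdiff_of_subset hCsub]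
      have hle : f S ≤ max (f C) (f T) := by
        rw [← hunion]; exact hprop C T hdisj
      have hfT : f T = 1 := by
        have := h01 T
        rw [hfS, hfC0] at hle
        omega
      have hTss : T ⊂ S := by
        refine Finset.ssubset_iff_of_subset (Finset.sdiff_subset) |>.mpr ?_
        exact ⟨v, hv, by simp [hT, hvC]⟩
      obtain ⟨C', hC'T, hne, hfC', w, hw⟩ := ih T hTss hTclosed hfT
      exact ⟨C', hC'T.trans Finset.sdiff_subset, hne, hfC', w, hw⟩

/-- For a proper requirement function `f` and a set `F` of tight edges, the
minimally unsatisfied sets are exactly the vertex sets of connected components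
`C` of `(V, F)` with `f C = 1`.  A set is unsatisfied if `f S = 1` and no edge
of `F` crosses `S`; connected components are reachability classes of the
relation generated by the edges of `F`. -/
theorem minimal_unsatisfied_iff_component
    {V : Type*} [Fintype V] [DecidableEq V]
    (f : Finset V → ℕ) (h01 : ∀ S, f S ≤ 1)
    (hV : f (Finset.univ : Finset V) = 0)
    (hsym : ∀ S : Finset V, f S = f (Finset.univ \ S))
    (hprop : ∀ A B : Finset V, Disjoint A B → f (A ∪ B) ≤ max (f A) (f B))
    (F : Finset (V × V)) (S : Finset V) :
    ((f S = 1 ∧ ∀ e ∈ F, (e.1 ∈ S ↔ e.2 ∈ S)) ∧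
        ∀ T : Finset V, T ⊂ S → T.Nonempty →
          ¬(f T = 1 ∧ ∀ e ∈ F, (e.1 ∈ T ↔ e.2 ∈ T))) ↔
      ((∃ v : V, ∀ u : V, u ∈ S ↔
          Relation.ReflTransGen (fun a b => (a, b) ∈ F ∨ (b, a) ∈ F) v u) ∧
        f S = 1) := by
  classical
  set r : V → V → Prop := fun a b => (a, b) ∈ F ∨ (b, a) ∈ F with hr
  have hrsymm : Symmetric r := fun a b h => h.symm
  have hRsymm : Symmetric (Relation.ReflTransGen r) :=
    haveI : Std.Symm r := ⟨hrsymm⟩; fun a b h => Std.Symm.symm (r := Relation.ReflTransGen r) a b h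
  constructor
  · rintro ⟨⟨hfS, hclosed⟩, hmin⟩
    obtain ⟨C, hCsub, hCne, hfC, v, hvC⟩ :=
      exists_comp' f h01 hV hsym hprop S hclosed hfS
    have hCclosed : ∀ e ∈ F, (e.1 ∈ C ↔ e.2 ∈ C) := by
      intro e he
      constructor
      · intro h; exact (hvC _).mpr (((hvC _).mp h).tail (Or.inl he))
      · intro h; exact (hvC _).mpr (((hvC _).mp h).tail (Or.inr he))
    have hCS : C = S := by
      by_contra hne
      exact hmin C (lt_of_le_of_ne hCsub hne) hCne ⟨hfC, hCclosed⟩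
    subst hCS
    exact ⟨⟨v, hvC⟩, hfC⟩
  · rintro ⟨⟨v, hv⟩, hfS⟩
    have hclosed : ∀ e ∈ F, (e.1 ∈ S ↔ e.2 ∈ S) := by
      intro e he
      constructor
      · intro h; exact (hv _).mpr (((hv _).mp h).tail (Or.inl he))
      · intro h; exact (hv _).mpr (((hv _).mp h).tail (Or.inr he))
    refine ⟨⟨hfS, hclosed⟩, ?_⟩
    rintro T hTS ⟨u, hu⟩ ⟨hfT, hTclosed⟩
    -- S ⊆ T : every w ∈ S is reachable from u, and T is closed
    have huS : u ∈ S := hTS.subset hu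
    have hsubset : S ⊆ T := by
      intro w hwS
      have h1 : Relation.ReflTransGen r u w :=
        (hRsymm ((hv u).mp huS)).trans ((hv w).mp hwS)
      exact closed_mem' hTclosed hu h1
    exact (hTS.not_subset) hsubset
end
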